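/- In the opinion dynamics model with group pressure, if ∑_{t=0}^∞ p_*(t) = +∞ where p_*(t) = minᵢ pᵢ(t), then all opinions asymptotically converge to a common limit: there exists ξ* ∈ ℝᵈ with lim_{t→∞} ξⁱ(t) = ξ* for every agent i. -/

import Mathlib

open Finset Filter

/-- If the minimal conformity levels are not summable (`∑ p_*(t) = +∞`), then all
opinions in the group-pressure dynamics converge to a common limit. -/
theorem consensus_of_divergent_conformity (d n : ℕ) [NeZero n]
    (ξ : ℕ → Fin n → EuclideanSpace ℝ (Fin d))
    (p : ℕ → Fin n → ℝ) (w : ℕ → Fin n → Fin n → ℝ)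
    (pub : ℕ → EuclideanSpace ℝ (Fin d))
    (hw0 : ∀ t i j, 0 ≤ w t i j)
    (hw1 : ∀ t i, ∑ j, w t i j = 1)
    (hp : ∀ t i, p t i ∈ Set.Icc (0 : ℝ) 1)
    (hpub : ∀ t, pub t ∈ convexHull ℝ (Set.range (ξ t)))
    (hupd : ∀ t i, ξ (t + 1) i = p t i • pub t + (1 - p t i) • ∑ j, w t i j • ξ t j)
    (hdiv : Tendsto (fun T => ∑ t ∈ Finset.range T,
        Finset.univ.inf' Finset.univ_nonempty (p t)) atTop atTop) :
    ∃ ξstar : EuclideanSpace ℝ (Fin d),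
      ∀ i, Tendsto (fun t => ξ t i) atTop (nhds ξstar) := by
  set pstar : ℕ → ℝ := fun t => Finset.univ.inf' Finset.univ_nonempty (p t) with hpstar
  set D : ℕ → ℝ := fun t => Metric.diam (Set.range (ξ t)) with hD
  have hps0 : ∀ t, 0 ≤ pstar t := fun t =>
    Finset.le_inf' _ _ fun i _ => (hp t i).1
  have hps1 : ∀ t, pstar t ≤ 1 := fun t =>
    le_trans (Finset.inf'_le _ (Finset.mem_univ ⟨0, Nat.pos_of_ne_zero (NeZero.ne n)⟩))
      (hp t _).2
  have hpsle : ∀ t i, pstar t ≤ p t i := fun t i => Finset.inf'_le _ (Finset.mem_univ i)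
  have hbdd : ∀ t, Bornology.IsBounded (Set.range (ξ t)) := fun t =>
    (Set.finite_range _).isBounded
  have havg : ∀ t i, (∑ j, w t i j • ξ t j) ∈ convexHull ℝ (Set.range (ξ t)) := by
    intro t i
    have := Finset.centerMass_mem_convexHull (Finset.univ) (fun j _ => hw0 t i j)
      (by rw [hw1]; norm_num) (fun j _ => Set.mem_range_self (f := ξ t) j)
    rwa [Finset.centerMass_eq_of_sum_1 _ _ (hw1 t i)] at this
  have hmem : ∀ t i, ξ (t + 1) i ∈ convexHull ℝ (Set.range (ξ t)) := by
    intro t i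
    rw [hupd]
    exact (convex_convexHull ℝ _) (hpub t) (havg t i) (hp t i).1 (by linarith [(hp t i).2])
      (by ring)
  have hnest : ∀ t, convexHull ℝ (Set.range (ξ (t + 1))) ⊆ convexHull ℝ (Set.range (ξ t)) := by
    intro t
    exact convexHull_min (Set.range_subset_iff.2 (hmem t)) (convex_convexHull ℝ _)
  have hullmono : ∀ N t, N ≤ t →
      convexHull ℝ (Set.range (ξ t)) ⊆ convexHull ℝ (Set.range (ξ N)) := by
    intro N t h
    induction t with
    | zero =>
      have : N = 0 := Nat.le_zero.mp h
      subst this; exact subset_rfl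
    | succ t ih =>
      rcases Nat.lt_or_ge N (t + 1) with h' | h'
      · exact (hnest t).trans (ih (Nat.lt_succ_iff.mp h'))
      · have : N = t + 1 := le_antisymm h h'
        subst this; exact subset_rfl
  have hhull : ∀ N t, N ≤ t → ∀ i, ξ t i ∈ convexHull ℝ (Set.range (ξ N)) :=
    fun N t h i => hullmono N t h (subset_convexHull ℝ _ (Set.mem_range_self i))
  have hdist : ∀ t x y, x ∈ convexHull ℝ (Set.range (ξ t)) → y ∈ convexHull ℝ (Set.range (ξ t)) →
      dist x y ≤ D t := by
    intro t x y hx hy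
    have hb : Bornology.IsBounded (convexHull ℝ (Set.range (ξ t))) :=
      isBounded_convexHull.2 (hbdd t)
    calc dist x y ≤ Metric.diam (convexHull ℝ (Set.range (ξ t))) :=
          Metric.dist_le_diam_of_mem hb hx hy
      _ = D t := convexHull_diam _
  have hD0 : ∀ t, 0 ≤ D t := fun t => Metric.diam_nonneg
  -- contraction
  have hcontr : ∀ t, D (t + 1) ≤ (1 - pstar t) * D t := by
    intro t
    have key : ∀ i j : Fin n, p t j ≤ p t i →
        dist (ξ (t + 1) i) (ξ (t + 1) j) ≤ (1 - pstar t) * D t := by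
      intro i j hij
      have hai := havg t i
      have haj := havg t j
      have h1 : dist (∑ k, w t i k • ξ t k) (∑ k, w t j k • ξ t k) ≤ D t := hdist t _ _ hai haj
      have h2 : dist (pub t) (∑ k, w t j k • ξ t k) ≤ D t := hdist t _ _ (hpub t) haj
      rw [dist_eq_norm, hupd, hupd]
      have hid : (p t i • pub t + (1 - p t i) • ∑ k, w t i k • ξ t k) -
          (p t j • pub t + (1 - p t j) • ∑ k, w t j k • ξ t k) =
          (1 - p t i) • ((∑ k, w t i k • ξ t k) - ∑ k, w t j k • ξ t k) +
          (p t i - p t j) • (pub t - ∑ k, w t j k • ξ t k) := by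
        module
      rw [hid]
      have hn1 : ‖(1 - p t i) • ((∑ k, w t i k • ξ t k) - ∑ k, w t j k • ξ t k)‖ ≤
          (1 - p t i) * D t := by
        rw [norm_smul, Real.norm_eq_abs, abs_of_nonneg (by linarith [(hp t i).2]), ← dist_eq_norm]
        exact mul_le_mul_of_nonneg_left h1 (by linarith [(hp t i).2])
      have hn2 : ‖(p t i - p t j) • (pub t - ∑ k, w t j k • ξ t k)‖ ≤ (p t i - p t j) * D t := by
        rw [norm_smul, Real.norm_eq_abs, abs_of_nonneg (by linarith), ← dist_eq_norm]
        exact mul_le_mul_of_nonneg_left h2 (by linarith)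
      calc _ ≤ _ := norm_add_le _ _
        _ ≤ (1 - p t i) * D t + (p t i - p t j) * D t := add_le_add hn1 hn2
        _ = (1 - p t j) * D t := by ring
        _ ≤ (1 - pstar t) * D t := by
            have := hpsle t j
            nlinarith [hD0 t]
    refine Metric.diam_le_of_forall_dist_le
      (mul_nonneg (by linarith [hps1 t]) (hD0 t)) ?_
    rintro x ⟨i, rfl⟩ y ⟨j, rfl⟩
    rcases le_total (p t j) (p t i) with h | h
    · exact key i j h
    · rw [dist_comm]; exact key j i h
  -- D t ≤ D 0 * ∏ (1 - pstar s)
  have hDprod : ∀ t, D t ≤ D 0 * ∏ s ∈ Finset.range t, (1 - pstar s) := by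
    intro t
    induction t with
    | zero => simp
    | succ t ih =>
      rw [Finset.prod_range_succ]
      calc D (t + 1) ≤ (1 - pstar t) * D t := hcontr t
        _ ≤ (1 - pstar t) * (D 0 * ∏ s ∈ Finset.range t, (1 - pstar s)) :=
            mul_le_mul_of_nonneg_left ih (by linarith [hps1 t])
        _ = D 0 * ((∏ s ∈ Finset.range t, (1 - pstar s)) * (1 - pstar t)) := by ring
  -- the product tends to 0
  have hprod_le : ∀ t, (∏ s ∈ Finset.range t, (1 - pstar s)) ≤
      Real.exp (-(∑ s ∈ Finset.range t, pstar s)) := by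
    intro t
    calc (∏ s ∈ Finset.range t, (1 - pstar s))
        ≤ ∏ s ∈ Finset.range t, Real.exp (-pstar s) := by
          apply Finset.prod_le_prod
          · intro s _; linarith [hps1 s]
          · intro s _
            have := Real.add_one_le_exp (-pstar s)
            linarith
      _ = Real.exp (∑ s ∈ Finset.range t, -pstar s) := (Real.exp_sum _ _).symm
      _ = Real.exp (-(∑ s ∈ Finset.range t, pstar s)) := by rw [Finset.sum_neg_distrib]
  have hprod0 : ∀ t, 0 ≤ ∏ s ∈ Finset.range t, (1 - pstar s) :=
    fun t => Finset.prod_nonneg fun s _ => by linarith [hps1 s]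
  have hDto0 : Tendsto D atTop (nhds 0) := by
    apply squeeze_zero hD0 (g := fun t => D 0 * Real.exp (-(∑ s ∈ Finset.range t, pstar s)))
    · intro t
      calc D t ≤ D 0 * ∏ s ∈ Finset.range t, (1 - pstar s) := hDprod t
        _ ≤ D 0 * Real.exp (-(∑ s ∈ Finset.range t, pstar s)) :=
            mul_le_mul_of_nonneg_left (hprod_le t) (hD0 0)
    · have h1 : Tendsto (fun t => -(∑ s ∈ Finset.range t, pstar s)) atTop atBot :=
        tendsto_neg_atBot_iff.mpr hdiv
      have h2 : Tendsto (fun t => Real.exp (-(∑ s ∈ Finset.range t, pstar s))) atTop (nhds 0) :=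
        Real.tendsto_exp_atBot.comp h1
      simpa using h2.const_mul (D 0)
  -- Cauchy sequences
  have hcauchy : ∀ i : Fin n, CauchySeq (fun t => ξ t i) := by
    intro i
    apply cauchySeq_of_le_tendsto_0 D _ hDto0
    intro a b N ha hb
    exact hdist N _ _ (hhull N a ha i) (hhull N b hb i)
  choose ℓ hℓ using fun i => cauchySeq_tendsto_of_complete (hcauchy i)
  set i₀ : Fin n := ⟨0, Nat.pos_of_ne_zero (NeZero.ne n)⟩
  refine ⟨ℓ i₀, fun i => ?_⟩
  have hdij : Tendsto (fun t => dist (ξ t i) (ξ t i₀)) atTop (nhds (dist (ℓ i) (ℓ i₀))) :=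
    (hℓ i).dist (hℓ i₀)
  have hdij0 : Tendsto (fun t => dist (ξ t i) (ξ t i₀)) atTop (nhds 0) := by
    apply squeeze_zero (fun t => dist_nonneg) _ hDto0
    intro t
    exact hdist t _ _ (subset_convexHull ℝ _ (Set.mem_range_self i))
      (subset_convexHull ℝ _ (Set.mem_range_self i₀))
  have : dist (ℓ i) (ℓ i₀) = 0 := tendsto_nhds_unique hdij hdij0
  rw [dist_eq_zero] at this
  rw [← this]
  exact hℓ i
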